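/- arXiv:1712.02919 — 4 statements merged into one kernel-verified Lean document; each statement's English description precedes it below -/
import Mathlib

section
/- Analytical solution to the knapsack problem: suppose σ̄ ∈ ℝ^n with σ̄ > 0 and τ̄ ≥ 0 are such that ρ̄ defined by ρ̄ₑ = (1/2)(σ̄ₑ - τ̄vₑ + wₑ)/σ̄ₑ satisfies ρ̄ ∈ {0,1}^n and τ̄(vᵀρ̄ - V_c) = 0 and vᵀρ̄ ≤ V_c. Then ρ̄ is a global minimizer of P_u(ρ) = -wᵀρ over the feasible set {ρ ∈ {0,1}^n : vᵀρ ≤ V_c}. -/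
/-- Analytical solution to the knapsack problem: if `σ̄ > 0`, `τ̄ ≥ 0`,
`ρ̄ₑ = (σ̄ₑ - τ̄vₑ + wₑ)/(2σ̄ₑ) ∈ {0,1}`, `τ̄(vᵀρ̄ - V_c) = 0` and
`vᵀρ̄ ≤ V_c`, then `ρ̄` globally minimizes `P_u(ρ) = -wᵀρ` over
`{ρ ∈ {0,1}^n : vᵀρ ≤ V_c}`. -/
theorem stmt_10 (n : ℕ) (w v : Fin n → ℝ) (Vc : ℝ) (hv : ∀ e, 0 < v e)
    (hVc : 0 < Vc) (σBar : Fin n → ℝ) (τBar : ℝ)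
    (hσ : ∀ e, 0 < σBar e) (hτ : 0 ≤ τBar)
    (ρBar : Fin n → ℝ)
    (hρdef : ∀ e, ρBar e = (1 / 2) * (σBar e - τBar * v e + w e) / σBar e)
    (hbin : ∀ e, ρBar e = 0 ∨ ρBar e = 1)
    (hcomp : τBar * ((∑ e, v e * ρBar e) - Vc) = 0)
    (hfeas : (∑ e, v e * ρBar e) ≤ Vc) :
    ∀ ρ : Fin n → ℝ, (∀ e, ρ e = 0 ∨ ρ e = 1) → (∑ e, v e * ρ e) ≤ Vc →
      -(∑ e, w e * ρBar e) ≤ -(∑ e, w e * ρ e) := by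
  intro ρ hρbin hρfeas
  set g : Fin n → ℝ → ℝ := fun e x =>
    σBar e * x ^ 2 - (σBar e + w e - τBar * v e) * x with hg
  -- vertex identity
  have hvertex : ∀ e, 2 * σBar e * ρBar e = σBar e - τBar * v e + w e := by
    intro e
    have h := hρdef e
    have hne : σBar e ≠ 0 := (hσ e).ne'
    rw [h, div_eq_mul_inv]
    linear_combination (σBar e - τBar * v e + w e) * mul_inv_cancel₀ hne
  -- termwise minimality
  have hmin : ∀ e, ∀ x : ℝ, g e (ρBar e) ≤ g e x := by
    intro e x
    have h := hvertex e
    have hs := hσ e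
    have key : g e x - g e (ρBar e) = σBar e * (x - ρBar e) ^ 2 := by
      simp only [hg]; linear_combination (x - ρBar e) * h
    nlinarith [mul_nonneg hs.le (sq_nonneg (x - ρBar e)), key]
  -- binary evaluation
  have hval : ∀ (f : Fin n → ℝ), (∀ e, f e = 0 ∨ f e = 1) →
      ∀ e, g e (f e) = τBar * v e * f e - w e * f e := by
    intro f hf e
    rcases hf e with h | h <;> simp [hg, h] <;> ring
  have hsum : ∑ e, g e (ρBar e) ≤ ∑ e, g e (ρ e) :=
    Finset.sum_le_sum fun e _ => hmin e (ρ e)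
  have h1 : ∑ e, g e (ρBar e) = τBar * (∑ e, v e * ρBar e) - ∑ e, w e * ρBar e := by
    rw [Finset.mul_sum, ← Finset.sum_sub_distrib]
    exact Finset.sum_congr rfl fun e _ => by rw [hval ρBar hbin e]; ring
  have h2 : ∑ e, g e (ρ e) = τBar * (∑ e, v e * ρ e) - ∑ e, w e * ρ e := by
    rw [Finset.mul_sum, ← Finset.sum_sub_distrib]
    exact Finset.sum_congr rfl fun e _ => by rw [hval ρ hρbin e]; ring
  have h3 : τBar * (∑ e, v e * ρBar e) = τBar * Vc := by linarith [hcomp]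
  have h4 : τBar * (∑ e, v e * ρ e) ≤ τBar * Vc :=
    mul_le_mul_of_nonneg_left hρfeas hτ
  rw [h1, h2] at hsum
  linarith
end

section
/- Weak duality for the canonical dual: for every feasible ρ ∈ {0,1}^n with vᵀρ ≤ V_c and every (σ, τ) with σ > 0 and τ ≥ 0, one has -wᵀρ ≥ -(1/4) Σₑ (σₑ - τvₑ + wₑ)² σₑ⁻¹ - τ V_c. -/
/-- Weak duality: for every feasible `ρ ∈ {0,1}^n` with `vᵀρ ≤ V_c` and every
`(σ,τ)` with `σ > 0`, `τ ≥ 0`, one has `P_u(ρ) ≥ P^d_u(σ,τ)`. -/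
theorem stmt_11 (n : ℕ) (w v : Fin n → ℝ) (Vc : ℝ) (hv : ∀ e, 0 < v e)
    (hVc : 0 < Vc) :
    ∀ ρ : Fin n → ℝ, (∀ e, ρ e = 0 ∨ ρ e = 1) → (∑ e, v e * ρ e) ≤ Vc →
    ∀ σ : Fin n → ℝ, ∀ τ : ℝ, (∀ e, 0 < σ e) → 0 ≤ τ →
      -(1 / 4) * (∑ e, (σ e - τ * v e + w e) ^ 2 * (σ e)⁻¹) - τ * Vc
        ≤ -(∑ e, w e * ρ e) := by
  intro ρ hρ hfeas σ τ hσ hτ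
  have key : ∀ e, -(1 / 4) * ((σ e - τ * v e + w e) ^ 2 * (σ e)⁻¹)
      ≤ τ * (v e * ρ e) - w e * ρ e := by
    intro e
    have hσe := hσ e
    have h1 : (σ e)⁻¹ * σ e = 1 := inv_mul_cancel₀ hσe.ne'
    have h2 : (0:ℝ) < (σ e)⁻¹ := inv_pos.mpr hσe
    have hρ2 : ρ e ^ 2 = ρ e := by rcases hρ e with h | h <;> rw [h] <;> ring
    have step : -(1 / 4) * ((σ e - τ * v e + w e) ^ 2 * (σ e)⁻¹)
        ≤ σ e * ρ e ^ 2 - (σ e - τ * v e + w e) * ρ e := by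
      nlinarith [sq_nonneg (2 * σ e * ρ e - (σ e - τ * v e + w e)),
        mul_pos h2 hσe, sq_nonneg ((2 * σ e * ρ e - (σ e - τ * v e + w e)) * (σ e)⁻¹)]
    calc -(1 / 4) * ((σ e - τ * v e + w e) ^ 2 * (σ e)⁻¹)
        ≤ σ e * ρ e ^ 2 - (σ e - τ * v e + w e) * ρ e := step
      _ = τ * (v e * ρ e) - w e * ρ e := by rw [hρ2]; ring
  have hsum : -(1 / 4) * (∑ e, (σ e - τ * v e + w e) ^ 2 * (σ e)⁻¹)
      ≤ τ * (∑ e, v e * ρ e) - ∑ e, w e * ρ e := by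
    rw [Finset.mul_sum, Finset.mul_sum, ← Finset.sum_sub_distrib]
    exact Finset.sum_le_sum fun e _ => key e
  have hτV : τ * (∑ e, v e * ρ e) ≤ τ * Vc := mul_le_mul_of_nonneg_left hfeas hτ
  linarith
end

section
/- For the one-dimensional double-well function Π(x) = (1/2)β(x²/2 - λ)² - f x with β, λ > 0 and f ≠ 0, every critical point x̄ (solution of β(x̄²/2 - λ)x̄ = f) satisfies x̄ ≠ 0, and with ς̄ = β(x̄²/2 - λ) = f/x̄, one has the complementary-dual equality Π(x̄) = Π^d(ς̄) where Π^d(ς) = -f²/(2ς) - ς²/(2β) - λς. -/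
/-- Complementary-dual equality for the double-well problem: if `x̄` is a
critical point of `Π(x) = ½β(x²/2-λ)² - fx` with `f ≠ 0`, then `x̄ ≠ 0` and,
with `ς̄ = β(x̄²/2-λ)`, one has `ς̄ = f/x̄` and `Π(x̄) = Π^d(ς̄)` where
`Π^d(ς) = -f²/(2ς) - ς²/(2β) - λς`. -/
theorem stmt_16 (β lam f xBar : ℝ) (hβ : 0 < β) (hlam : 0 < lam) (hf : f ≠ 0)
    (hcrit : β * (xBar ^ 2 / 2 - lam) * xBar = f) :
    xBar ≠ 0 ∧
    β * (xBar ^ 2 / 2 - lam) = f / xBar ∧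
    (1 / 2) * β * (xBar ^ 2 / 2 - lam) ^ 2 - f * xBar
      = -(f ^ 2) / (2 * (β * (xBar ^ 2 / 2 - lam)))
        - (β * (xBar ^ 2 / 2 - lam)) ^ 2 / (2 * β)
        - lam * (β * (xBar ^ 2 / 2 - lam)) := by
  have hx : xBar ≠ 0 := by
    rintro rfl; simp at hcrit; exact hf hcrit.symm
  have hς : β * (xBar ^ 2 / 2 - lam) ≠ 0 := by
    intro h; apply hf; rw [← hcrit, h, zero_mul]
  refine ⟨hx, ?_, ?_⟩
  · field_simp [← hcrit]; rw [← hcrit]; ring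
  · subst hcrit
    have hq : xBar ^ 2 / 2 - lam ≠ 0 := fun h => hς (by rw [h, mul_zero])
    have hq2 : xBar ^ 2 - 2 * lam ≠ 0 := fun h => hq (by linarith)
    field_simp [hβ.ne', hq2]
    ring
end

section
/- For β > 0, λ > 0 and f ≠ 0, the dual algebraic equation (β⁻¹ς + λ)ς² = f²/2 has exactly one solution ς₁ > 0, and the corresponding x₁ = f/ς₁ is the global minimizer of Π(x) = (1/2)β(x²/2 - λ)² - f x over ℝ. -/
lemma stmt_17_mono (β lam a b : ℝ) (hβ : 0 < β) (hlam : 0 < lam)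
    (ha : 0 < a) (hab : a < b) :
    (β⁻¹ * a + lam) * a ^ 2 < (β⁻¹ * b + lam) * b ^ 2 := by
  have hb : 0 < b := ha.trans hab
  have hbi : 0 < β⁻¹ := inv_pos.mpr hβ
  have hbr : 0 < β⁻¹ * (a ^ 2 + a * b + b ^ 2) + lam * (a + b) := by positivity
  have hprod := mul_pos (sub_pos.mpr hab) hbr
  nlinarith [hprod]

/-- For `β, λ > 0` and `f ≠ 0`, the dual algebraic equation
`(β⁻¹ς + λ)ς² = f²/2` has exactly one positive solution `ς₁ > 0`, and
`x₁ = f/ς₁` is the global minimizer of `Π(x) = ½β(x²/2-λ)² - fx`. -/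
theorem stmt_17 (β lam f : ℝ) (hβ : 0 < β) (hlam : 0 < lam) (hf : f ≠ 0) :
    (∃! ς : ℝ, 0 < ς ∧ (β⁻¹ * ς + lam) * ς ^ 2 = f ^ 2 / 2) ∧
    ∀ ς : ℝ, 0 < ς → (β⁻¹ * ς + lam) * ς ^ 2 = f ^ 2 / 2 →
      ∀ x : ℝ, (1 / 2) * β * ((f / ς) ^ 2 / 2 - lam) ^ 2 - f * (f / ς)
        ≤ (1 / 2) * β * (x ^ 2 / 2 - lam) ^ 2 - f * x := by
  have hf2 : 0 < f ^ 2 / 2 := by positivity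
  constructor
  · -- existence and uniqueness
    obtain ⟨M, hM⟩ : ∃ M : ℝ, M = 1 + f ^ 2 / (2 * lam) := ⟨_, rfl⟩
    have hq : 0 ≤ f ^ 2 / (2 * lam) := by positivity
    have hM1 : (1 : ℝ) ≤ M := by rw [hM]; linarith
    have hM0 : (0 : ℝ) ≤ M := by linarith
    have hcont : ContinuousOn (fun ς : ℝ => (β⁻¹ * ς + lam) * ς ^ 2) (Set.Icc 0 M) := by
      fun_prop
    have hIV := intermediate_value_Icc hM0 hcont
    have hmem : f ^ 2 / 2 ∈ Set.Icc ((β⁻¹ * 0 + lam) * 0 ^ 2) ((β⁻¹ * M + lam) * M ^ 2) := by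
      constructor
      · simp; positivity
      · have hβi : 0 ≤ β⁻¹ := by positivity
        have h1 : lam * M ≤ (β⁻¹ * M + lam) * M ^ 2 := by
          nlinarith [mul_nonneg hβi (mul_nonneg hM0 (mul_nonneg hM0 hM0)),
            mul_nonneg hlam.le (mul_nonneg hM0 (sub_nonneg.mpr hM1))]
        have h2 : f ^ 2 / 2 ≤ lam * M := by
          have hlm : lam * M = lam + f ^ 2 / 2 := by
            rw [hM]; field_simp
          linarith
        linarith
    obtain ⟨ς, hςmem, hςeq⟩ := hIV hmem
    simp only at hςeq
    have hςpos : 0 < ς := by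
      rcases lt_or_eq_of_le hςmem.1 with h | h
      · exact h
      · exfalso; rw [← h] at hςeq; simp at hςeq; nlinarith
    refine ⟨ς, ⟨hςpos, hςeq⟩, ?_⟩
    rintro y ⟨hy, hyeq⟩
    by_contra hne
    rcases lt_or_gt_of_ne hne with h | h
    · have := stmt_17_mono β lam y ς hβ hlam hy h
      rw [hyeq, hςeq] at this; exact lt_irrefl _ this
    · have := stmt_17_mono β lam ς y hβ hlam hςpos h
      rw [hyeq, hςeq] at this; exact lt_irrefl _ this
  · intro ς hς heq x
    have hςne : ς ≠ 0 := ne_of_gt hς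
    have hβne : β ≠ 0 := ne_of_gt hβ
    have hβ' : 0 < 2 * β := by linarith
    -- polynomial form of the dual equation
    have hpoly : 2 * ς ^ 3 + 2 * lam * β * ς ^ 2 = β * f ^ 2 := by
      have h := heq
      field_simp at h
      linarith
    have hkey : β * ((f / ς) ^ 2 / 2 - lam) = ς := by
      field_simp
      nlinarith [hpoly]
    -- Π(x) ≥ Ξ(x,ς)
    have hA : ∀ y : ℝ, ς * (y ^ 2 / 2 - lam) - ς ^ 2 / (2 * β) - f * y
        ≤ (1 / 2) * β * (y ^ 2 / 2 - lam) ^ 2 - f * y := by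
      intro y
      have e : (1 / 2) * β * (y ^ 2 / 2 - lam) ^ 2
          - (ς * (y ^ 2 / 2 - lam) - ς ^ 2 / (2 * β))
          = (β * (y ^ 2 / 2 - lam) - ς) ^ 2 / (2 * β) := by
        field_simp
        ring
      have hnn : 0 ≤ (β * (y ^ 2 / 2 - lam) - ς) ^ 2 / (2 * β) :=
        div_nonneg (sq_nonneg _) hβ'.le
      linarith
    -- Π(x₁) = Ξ(x₁,ς)
    have h5 : ς ^ 2 / (2 * β) = ς * ((f / ς) ^ 2 / 2 - lam)
        - (1 / 2) * β * ((f / ς) ^ 2 / 2 - lam) ^ 2 := by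
      rw [div_eq_iff (ne_of_gt hβ')]
      linear_combination (β * ((f / ς) ^ 2 / 2 - lam) - ς) * hkey
    have hEq : (1 / 2) * β * ((f / ς) ^ 2 / 2 - lam) ^ 2 - f * (f / ς)
        = ς * ((f / ς) ^ 2 / 2 - lam) - ς ^ 2 / (2 * β) - f * (f / ς) := by
      rw [h5]; ring
    -- Ξ(x₁,ς) ≤ Ξ(x,ς) in x
    have h2 : ς * (f / ς) = f := by field_simp
    have h3 : ς * x * (f / ς) = f * x := by
      rw [mul_comm ς x, mul_assoc, h2, mul_comm]
    have h4 : ς * (f / ς) ^ 2 = f * (f / ς) := by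
      field_simp
    have hB : ς * ((f / ς) ^ 2 / 2 - lam) - f * (f / ς)
        ≤ ς * (x ^ 2 / 2 - lam) - f * x := by
      nlinarith [mul_nonneg hς.le (sq_nonneg (x - f / ς)), h3, h4]
    calc (1 / 2) * β * ((f / ς) ^ 2 / 2 - lam) ^ 2 - f * (f / ς)
        = ς * ((f / ς) ^ 2 / 2 - lam) - ς ^ 2 / (2 * β) - f * (f / ς) := hEq
      _ ≤ ς * (x ^ 2 / 2 - lam) - ς ^ 2 / (2 * β) - f * x := by linarith [hB]
      _ ≤ (1 / 2) * β * (x ^ 2 / 2 - lam) ^ 2 - f * x := hA x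
end
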